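/- The resolvent R(t,s,λ) is jointly continuous as a function of (t,s,λ) on Δ × ℝ; in particular, for each fixed (t,s) ∈ Δ the map λ ↦ R(t,s,λ) is continuous, uniformly in (t,s) on Δ for λ ranging in compact sets. -/

import Mathlib

open MeasureTheory

/-- Iterated kernels of an everywhere-defined kernel `G`; `iterK G n` corresponds to `K_{n+1}`. -/
noncomputable def iterK (G : ℝ × ℝ → ℝ) : ℕ → ℝ × ℝ → ℝ
  | 0 => G
  | n + 1 => fun q => ∫ z in q.2..q.1, G (q.1, z) * iterK G n (z, q.2)

lemma iterK_continuous {G : ℝ × ℝ → ℝ} (hG : Continuous G) (n : ℕ) :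
    Continuous (iterK G n) := by
  induction n with
  | zero => exact hG
  | succ n ih =>
    have hf : Continuous (Function.uncurry fun (q : ℝ × ℝ) (z : ℝ) =>
        G (q.1, z) * iterK G n (z, q.2)) := by
      apply Continuous.mul
      · exact hG.comp (by fun_prop)
      · exact ih.comp (by fun_prop)
    have h1 : Continuous fun q : ℝ × ℝ =>
        ∫ z in (0:ℝ)..q.1, G (q.1, z) * iterK G n (z, q.2) :=
      intervalIntegral.continuous_parametric_intervalIntegral_of_continuous hf continuous_fst
    have h2 : Continuous fun q : ℝ × ℝ =>
        ∫ z in (0:ℝ)..q.2, G (q.1, z) * iterK G n (z, q.2) :=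
      intervalIntegral.continuous_parametric_intervalIntegral_of_continuous hf continuous_snd
    have key : iterK G (n + 1) = fun q : ℝ × ℝ =>
        (∫ z in (0:ℝ)..q.1, G (q.1, z) * iterK G n (z, q.2)) -
        (∫ z in (0:ℝ)..q.2, G (q.1, z) * iterK G n (z, q.2)) := by
      funext q
      have hcz : Continuous fun z : ℝ => G (q.1, z) * iterK G n (z, q.2) := by
        apply Continuous.mul
        · exact hG.comp (by fun_prop)
        · exact ih.comp (by fun_prop)
      have hi1 : IntervalIntegrable (fun z : ℝ => G (q.1, z) * iterK G n (z, q.2))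
          volume (0:ℝ) q.1 := hcz.intervalIntegrable _ _
      have hi2 : IntervalIntegrable (fun z : ℝ => G (q.1, z) * iterK G n (z, q.2))
          volume (0:ℝ) q.2 := hcz.intervalIntegrable _ _
      exact (intervalIntegral.integral_interval_sub_left hi1 hi2).symm
    rw [key]
    exact h1.sub h2

lemma iterK_bound {t₀ T : ℝ} {G : ℝ × ℝ → ℝ} (hG : Continuous G) {M : ℝ} (hM0 : 0 ≤ M)
    (hGM : ∀ q : ℝ × ℝ, t₀ ≤ q.2 → q.2 ≤ q.1 → q.1 ≤ T → |G q| ≤ M) (n : ℕ) :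
    ∀ t s, t₀ ≤ s → s ≤ t → t ≤ T →
      |iterK G n (t, s)| ≤ M ^ (n + 1) * (t - s) ^ n / n.factorial := by
  induction n with
  | zero =>
    intro t s hs hst htT
    simpa [iterK] using hGM (t, s) hs hst htT
  | succ n ih =>
    intro t s hs hst htT
    have hts : 0 ≤ t - s := by linarith
    have hcz : Continuous fun z : ℝ => G (t, z) * iterK G n (z, s) := by
      apply Continuous.mul
      · exact hG.comp (by fun_prop)
      · exact (iterK_continuous hG n).comp (by fun_prop)
    have habs : |iterK G (n + 1) (t, s)| ≤
        ∫ z in s..t, |G (t, z) * iterK G n (z, s)| := by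
      show |∫ z in s..t, G (t, z) * iterK G n (z, s)| ≤ _
      exact intervalIntegral.abs_integral_le_integral_abs hst
    have hmono : (∫ z in s..t, |G (t, z) * iterK G n (z, s)|) ≤
        ∫ z in s..t, M * (M ^ (n + 1) * (z - s) ^ n / n.factorial) := by
      apply intervalIntegral.integral_mono_on hst
      · exact hcz.abs.intervalIntegrable s t
      · exact (Continuous.intervalIntegrable (by fun_prop) s t)
      · intro z hz
        rw [abs_mul]
        have h1 : |G (t, z)| ≤ M := hGM (t, z) (le_trans hs hz.1) hz.2 htT
        have h2 : |iterK G n (z, s)| ≤ M ^ (n + 1) * (z - s) ^ n / n.factorial :=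
          ih z s hs hz.1 (le_trans hz.2 htT)
        have hnn : (0:ℝ) ≤ M ^ (n + 1) * (z - s) ^ n / n.factorial := by
          apply div_nonneg _ (Nat.cast_nonneg _)
          exact mul_nonneg (pow_nonneg hM0 _) (pow_nonneg (by linarith [hz.1]) _)
        exact mul_le_mul h1 h2 (abs_nonneg _) hM0
    have hcalc : (∫ z in s..t, M * (M ^ (n + 1) * (z - s) ^ n / n.factorial)) =
        M ^ (n + 2) * (t - s) ^ (n + 1) / (n + 1).factorial := by
      have hpow : (∫ z in s..t, (z - s) ^ n) = (t - s) ^ (n + 1) / (n + 1) := by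
        rw [intervalIntegral.integral_comp_sub_right (fun u => u ^ n) s]
        simp [integral_pow]
      have : (∫ z in s..t, M * (M ^ (n + 1) * (z - s) ^ n / n.factorial)) =
          (M * (M ^ (n + 1) / n.factorial)) * ∫ z in s..t, (z - s) ^ n := by
        rw [← intervalIntegral.integral_const_mul]
        congr 1
        funext z
        ring
      rw [this, hpow]
      rw [Nat.factorial_succ]
      have hfac : (n.factorial : ℝ) ≠ 0 := Nat.cast_ne_zero.2 n.factorial_ne_zero
      have hn1 : ((n:ℝ) + 1) ≠ 0 := by positivity
      field_simp
      push_cast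
      ring
    calc |iterK G (n + 1) (t, s)| ≤ ∫ z in s..t, |G (t, z) * iterK G n (z, s)| := habs
      _ ≤ ∫ z in s..t, M * (M ^ (n + 1) * (z - s) ^ n / n.factorial) := hmono
      _ = M ^ (n + 2) * (t - s) ^ (n + 1) / (n + 1).factorial := hcalc

/-- The resolvent R(t,s,λ) is jointly continuous on Δ × ℝ; in particular λ ↦ R(t,s,λ)
is continuous, uniformly in (t,s) ∈ Δ for λ in compact sets. -/
theorem resolvent_jointly_continuous
    (t₀ T : ℝ) (ht : t₀ < T)
    (K : ℝ → ℝ → ℝ)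
    (hK : ContinuousOn (fun q : ℝ × ℝ => K q.1 q.2)
      {q : ℝ × ℝ | t₀ ≤ q.2 ∧ q.2 ≤ q.1 ∧ q.1 ≤ T})
    (Kn : ℕ → ℝ → ℝ → ℝ)
    (hKn1 : ∀ t s, Kn 1 t s = K t s)
    (hKnrec : ∀ n, 2 ≤ n → ∀ t s, Kn n t s = ∫ z in s..t, K t z * Kn (n - 1) z s)
    (R : ℝ → ℝ → ℝ → ℝ)
    (hR : ∀ t s lam, R t s lam = ∑' n : ℕ, lam ^ (n + 1) * Kn (n + 1) t s) :
    ContinuousOn (fun q : (ℝ × ℝ) × ℝ => R q.1.1 q.1.2 q.2)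
      (({q : ℝ × ℝ | t₀ ≤ q.2 ∧ q.2 ≤ q.1 ∧ q.1 ≤ T}) ×ˢ (Set.univ : Set ℝ)) ∧
    ∀ C : Set ℝ, IsCompact C → ∀ lam₀ ∈ C, ∀ ε > (0 : ℝ), ∃ δ > (0 : ℝ),
      ∀ lam ∈ C, |lam - lam₀| < δ →
        ∀ t s, t₀ ≤ s → s ≤ t → t ≤ T → |R t s lam - R t s lam₀| < ε := by
  set Δ : Set (ℝ × ℝ) := {q : ℝ × ℝ | t₀ ≤ q.2 ∧ q.2 ≤ q.1 ∧ q.1 ≤ T} with hΔdef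
  -- Δ is closed and compact
  have hΔclosed : IsClosed Δ := by
    have : Δ = {q : ℝ × ℝ | t₀ ≤ q.2} ∩ ({q : ℝ × ℝ | q.2 ≤ q.1} ∩ {q : ℝ × ℝ | q.1 ≤ T}) := rfl
    rw [this]
    exact (isClosed_le continuous_const continuous_snd).inter
      ((isClosed_le continuous_snd continuous_fst).inter
        (isClosed_le continuous_fst continuous_const))
  have hΔcompact : IsCompact Δ := by
    apply IsCompact.of_isClosed_subset (isCompact_Icc (a := ((t₀, t₀) : ℝ × ℝ)) (b := (T, T)))
      hΔclosed
    rintro ⟨a, b⟩ ⟨h1, h2, h3⟩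
    simp only [Set.mem_Icc, Prod.le_def]
    exact ⟨⟨le_trans h1 h2, h1⟩, ⟨h3, le_trans h2 h3⟩⟩
  -- Extend K to a continuous function on all of ℝ²
  obtain ⟨Gc, hGc⟩ := ContinuousMap.exists_restrict_eq (X := ℝ × ℝ) (Y := ℝ) hΔclosed
    ⟨_, hK.restrict⟩
  set G : ℝ × ℝ → ℝ := ⇑Gc with hGdef
  have hGcont : Continuous G := Gc.continuous
  have hGeq : ∀ q ∈ Δ, G q = K q.1 q.2 := by
    intro q hq
    have := congrFun (congrArg ContinuousMap.toFun hGc) ⟨q, hq⟩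
    exact this
  -- bound on Δ
  obtain ⟨M₀, hM₀⟩ := hΔcompact.exists_bound_of_continuousOn hGcont.continuousOn
  set M : ℝ := max M₀ 0 with hMdef
  have hM0 : 0 ≤ M := le_max_right _ _
  have hGM : ∀ q : ℝ × ℝ, t₀ ≤ q.2 → q.2 ≤ q.1 → q.1 ≤ T → |G q| ≤ M := by
    intro q h1 h2 h3
    exact le_trans (hM₀ q ⟨h1, h2, h3⟩) (le_max_left _ _)
  -- Kn agrees with iterK G on Δ
  have hagree : ∀ n : ℕ, ∀ t s : ℝ, t₀ ≤ s → s ≤ t → t ≤ T →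
      Kn (n + 1) t s = iterK G n (t, s) := by
    intro n
    induction n with
    | zero =>
      intro t s hs hst htT
      rw [hKn1]
      exact (hGeq (t, s) ⟨hs, hst, htT⟩).symm
    | succ n ih =>
      intro t s hs hst htT
      rw [hKnrec (n + 2) (by omega)]
      show (∫ z in s..t, K t z * Kn (n + 2 - 1) z s) = ∫ z in s..t, G (t, z) * iterK G n (z, s)
      apply intervalIntegral.integral_congr
      intro z hz
      rw [Set.uIcc_of_le hst] at hz
      have hz1 : s ≤ z := hz.1
      have hz2 : z ≤ t := hz.2
      have e1 : K t z = G (t, z) := (hGeq (t, z) ⟨le_trans hs hz1, hz2, htT⟩).symm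
      have e2 : Kn (n + 2 - 1) z s = iterK G n (z, s) := by
        show Kn (n + 1) z s = _
        exact ih z s hs hz1 (le_trans hz2 htT)
      simp only [e1, e2]
  set L : ℝ := T - t₀ with hLdef
  have hL0 : 0 ≤ L := by simp [hLdef]; linarith
  -- the series function
  set F : (ℝ × ℝ) × ℝ → ℝ := fun p => ∑' n : ℕ, p.2 ^ (n + 1) * iterK G n p.1 with hFdef
  -- F is continuous on Δ ×ˢ Icc (-A) A for any A ≥ 0
  have hFA : ∀ A : ℝ, 0 ≤ A → ContinuousOn F (Δ ×ˢ Set.Icc (-A) A) := by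
    intro A hA
    apply continuousOn_tsum (u := fun n : ℕ => (A * M) * ((A * M * L) ^ n / n.factorial))
    · intro n
      apply Continuous.continuousOn
      exact (continuous_snd.pow _).mul ((iterK_continuous hGcont n).comp continuous_fst)
    · exact (Real.summable_pow_div_factorial (A * M * L)).mul_left _
    · rintro n ⟨⟨t, s⟩, lam⟩ ⟨⟨h1, h2, h3⟩, hlam⟩
      have hlamA : |lam| ≤ A := abs_le.2 hlam
      have hts : 0 ≤ t - s := by linarith
      have htsL : t - s ≤ L := by simp [hLdef]; linarith
      have hb := iterK_bound hGcont hM0 hGM n t s h1 h2 h3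
      have habs0 : (0:ℝ) ≤ |lam| := abs_nonneg _
      calc ‖lam ^ (n + 1) * iterK G n (t, s)‖
          = |lam| ^ (n + 1) * |iterK G n (t, s)| := by
            rw [Real.norm_eq_abs, abs_mul, abs_pow]
        _ ≤ A ^ (n + 1) * (M ^ (n + 1) * (t - s) ^ n / n.factorial) := by
            apply mul_le_mul (pow_le_pow_left₀ habs0 hlamA _) hb (abs_nonneg _)
              (pow_nonneg hA _)
        _ = (A * M) * ((A * M * (t - s)) ^ n / n.factorial) := by
            rw [mul_pow, mul_pow]
            field_simp
            try ring
        _ ≤ (A * M) * ((A * M * L) ^ n / n.factorial) := by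
            have hnn2 : (0:ℝ) ≤ A * M * (t - s) := mul_nonneg (mul_nonneg hA hM0) hts
            gcongr
  -- F is continuous on Δ × univ
  have hFcont : ContinuousOn F (Δ ×ˢ (Set.univ : Set ℝ)) := by
    rintro ⟨q, lam⟩ ⟨hq, -⟩
    set A : ℝ := |lam| + 1 with hAdef
    have hA0 : 0 ≤ A := by positivity
    have hmem : (q, lam) ∈ Δ ×ˢ Set.Icc (-A) A := by
      refine ⟨hq, ?_⟩
      constructor
      · linarith [neg_abs_le lam]
      · linarith [le_abs_self lam]
    have hcw : ContinuousWithinAt F (Δ ×ˢ Set.Icc (-A) A) (q, lam) := hFA A hA0 _ hmem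
    apply hcw.mono_of_mem_nhdsWithin
    rw [mem_nhdsWithin]
    refine ⟨(Set.univ : Set (ℝ × ℝ)) ×ˢ Set.Ioo (-A) A, isOpen_univ.prod isOpen_Ioo, ?_, ?_⟩
    · refine ⟨trivial, ?_, ?_⟩
      · linarith [neg_abs_le lam]
      · linarith [le_abs_self lam]
    · rintro ⟨q', lam'⟩ ⟨⟨-, hl1, hl2⟩, hq', -⟩
      exact ⟨hq', le_of_lt hl1, le_of_lt hl2⟩
  -- R agrees with F on Δ × univ
  have hRF : ∀ p : (ℝ × ℝ) × ℝ, p ∈ Δ ×ˢ (Set.univ : Set ℝ) →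
      R p.1.1 p.1.2 p.2 = F p := by
    rintro ⟨⟨t, s⟩, lam⟩ ⟨⟨h1, h2, h3⟩, -⟩
    rw [hR]
    apply tsum_congr
    intro n
    rw [hagree n t s h1 h2 h3]
  constructor
  · exact hFcont.congr hRF
  · intro C hC lam₀ hlam₀ ε hε
    have hcomp : IsCompact (Δ ×ˢ C) := hΔcompact.prod hC
    have huc : UniformContinuousOn F (Δ ×ˢ C) :=
      hcomp.uniformContinuousOn_of_continuous
        (hFcont.mono (Set.prod_mono le_rfl (Set.subset_univ C)))
    rw [Metric.uniformContinuousOn_iff] at huc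
    obtain ⟨δ, hδ, hδ'⟩ := huc ε hε
    refine ⟨δ, hδ, ?_⟩
    intro lam hlam hld t s h1 h2 h3
    have hq : ((t, s) : ℝ × ℝ) ∈ Δ := ⟨h1, h2, h3⟩
    have hd : dist (((t, s) : ℝ × ℝ), lam) (((t, s) : ℝ × ℝ), lam₀) < δ := by
      rw [Prod.dist_eq]
      simp only [dist_self]
      rw [max_eq_right dist_nonneg, Real.dist_eq]
      exact hld
    have := hδ' (((t, s) : ℝ × ℝ), lam) ⟨hq, hlam⟩ (((t, s) : ℝ × ℝ), lam₀) ⟨hq, hlam₀⟩ hd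
    rw [Real.dist_eq] at this
    rw [hRF ((t, s), lam) ⟨hq, trivial⟩, hRF ((t, s), lam₀) ⟨hq, trivial⟩]
    exact this
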